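/- Suppose m ∈ F^k, c = m·G_a, c̄ = c·W, and f ∈ F^n satisfies f_j = 0 for all k ≤ j ≤ n−1 and f·𝐅 = c̄. Then f = m·Ã·W·𝐅⁻·D, where Ã = (A | 0) is the k×n matrix obtained by appending n−k all-zero columns to A. Equivalently, transposing, f^T = D·𝐅⁻·W·Ã^T·m^T (using that 𝐅, 𝐅⁻, D and W are symmetric). -/
import Mathlib

open Matrix Finset

private lemma zpow_mod_eq' {F : Type*} [Field F] {α : F} {n : ℕ} (hα0 : α ≠ 0)
    (h1 : α ^ (n : ℤ) = 1) {a b : ℤ} (h : (n : ℤ) ∣ a - b) : α ^ a = α ^ b := by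
  obtain ⟨c, hc⟩ := h
  have ha : a = b + n * c := by linarith
  rw [ha, zpow_add₀ hα0, _root_.zpow_mul, h1, _root_.one_zpow, mul_one]

private lemma shift_sum' {F : Type*} [Field F] {n : ℕ} (hn : 1 ≤ n) {α : F} (hα0 : α ≠ 0)
    (h1 : α ^ (n : ℤ) = 1) (c : ℤ) (h : Fin n → F) (s : Fin n) :
    ∑ t : Fin n, h (t - s) * α ^ (c * ((t : ℕ) : ℤ)) =
      α ^ (c * ((s : ℕ) : ℤ)) * ∑ u : Fin n, h u * α ^ (c * ((u : ℕ) : ℤ)) := by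
  haveI : NeZero n := ⟨by omega⟩
  rw [Finset.mul_sum]
  refine Fintype.sum_equiv (Equiv.subRight s) _ _ ?_
  intro t
  simp only [Equiv.subRight_apply]
  have key : α ^ (c * ((t : ℕ) : ℤ)) =
      α ^ (c * ((s : ℕ) : ℤ)) * α ^ (c * (((t - s : Fin n) : ℕ) : ℤ)) := by
    rw [← zpow_add₀ hα0, ← mul_add]
    apply zpow_mod_eq' hα0 h1
    have hval : (t : ℕ) = (((t - s : Fin n) : ℕ) + (s : ℕ)) % n := by
      conv_lhs => rw [← sub_add_cancel t s]
      rw [Fin.add_def]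
    set a : ℕ := ((t - s : Fin n) : ℕ) + (s : ℕ) with ha
    have h2 : ((t : ℕ) : ℤ) = (a : ℤ) % n := by rw [hval]; exact_mod_cast Int.natCast_mod a n
    have haz : (a : ℤ) = (((t - s : Fin n) : ℕ) : ℤ) + ((s : ℕ) : ℤ) := by push_cast [ha]; ring
    refine ⟨-(c * ((a : ℤ) / n)), ?_⟩
    rw [h2, Int.emod_def, haz]
    ring
  rw [key]; ring

theorem stmt_9 (F : Type*) [Field F] (n k : ℕ) (b : ℤ)
    (hn : 1 ≤ n) (hk : 1 ≤ k) (hkn : k < n)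
    (α : F) (hα : IsPrimitiveRoot α n)
    (hchar : (n : F) = 1)
    (A : Matrix (Fin k) (Fin k) F) (hA : IsUnit A)
    (m : Fin k → F) (f : Fin n → F) :
    let g : Polynomial F :=
      ∏ t ∈ Finset.range (n - k), (Polynomial.X - Polynomial.C (α ^ (b + (t : ℤ))))
    let gb : Fin n → F := fun i => g.coeff i * α ^ ((b - 1) * ((i : ℕ) : ℤ))
    let G : Matrix (Fin k) (Fin n) F :=
      Matrix.of fun i t => g.coeff ((t - Fin.castLE hkn.le i : Fin n) : ℕ)
    let Ga : Matrix (Fin k) (Fin n) F := A * G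
    let W : Matrix (Fin n) (Fin n) F :=
      Matrix.diagonal fun i : Fin n => α ^ ((b - 1) * ((i : ℕ) : ℤ))
    let Fmat : Matrix (Fin n) (Fin n) F :=
      Matrix.of fun i j : Fin n => α ^ ((i : ℕ) * (j : ℕ))
    let Finv : Matrix (Fin n) (Fin n) F :=
      Matrix.of fun i j : Fin n => α ^ (-(((i : ℕ) : ℤ) * ((j : ℕ) : ℤ)))
    let D : Matrix (Fin n) (Fin n) F :=
      Matrix.diagonal fun j : Fin n => ∑ i : Fin n, gb i * α ^ (-(((i : ℕ) : ℤ) * ((j : ℕ) : ℤ)))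
    let Atil : Matrix (Fin k) (Fin n) F :=
      Matrix.of fun i j => if h : (j : ℕ) < k then A i ⟨(j : ℕ), h⟩ else 0
    (∀ j : Fin n, k ≤ (j : ℕ) → f j = 0) →
    Matrix.vecMul f Fmat = Matrix.vecMul (Matrix.vecMul m Ga) W →
    f = Matrix.vecMul m (Atil * W * Finv * D) := by
  intro g gb G Ga W Fmat Finv D Atil _hf0 hfF
  have hα0 : α ≠ 0 := hα.ne_zero (by omega)
  have hαn : α ^ (n : ℤ) = 1 := by
    rw [zpow_natCast]; exact hα.pow_eq_one
  -- Step A : Fmat * Finv = 1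
  have hFF : Fmat * Finv = 1 := by
    ext i j
    simp only [Fmat, Finv, Matrix.mul_apply, Matrix.of_apply, Matrix.one_apply]
    have hterm : ∀ t : Fin n,
        α ^ ((i : ℕ) * (t : ℕ)) * α ^ (-(((t : ℕ) : ℤ) * ((j : ℕ) : ℤ))) =
        (α ^ (((i : ℕ) : ℤ) - ((j : ℕ) : ℤ))) ^ (t : ℕ) := by
      intro t
      rw [← zpow_natCast α ((i : ℕ) * (t : ℕ)), ← zpow_add₀ hα0,
        ← zpow_natCast (α ^ (((i : ℕ) : ℤ) - ((j : ℕ) : ℤ))) (t : ℕ), ← _root_.zpow_mul]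
      congr 1
      push_cast
      ring
    rw [Finset.sum_congr rfl (fun t _ => hterm t),
      Fin.sum_univ_eq_sum_range (fun t => (α ^ (((i : ℕ) : ℤ) - ((j : ℕ) : ℤ))) ^ t) n]
    by_cases hij : i = j
    · subst hij
      simp [hchar]
    · have hne : α ^ (((i : ℕ) : ℤ) - ((j : ℕ) : ℤ)) ≠ 1 := by
        intro hcon
        rw [hα.zpow_eq_one_iff_dvd] at hcon
        have habs : ((i : ℕ) : ℤ) - ((j : ℕ) : ℤ) = 0 := by
          refine Int.eq_zero_of_abs_lt_dvd hcon ?_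
          have := i.isLt; have := j.isLt
          rw [abs_lt]
          constructor <;> [push_cast; push_cast] <;> omega
        exact hij (Fin.ext (by omega))
      have hpow : (α ^ (((i : ℕ) : ℤ) - ((j : ℕ) : ℤ))) ^ n = 1 := by
        rw [← zpow_natCast (α ^ (((i : ℕ) : ℤ) - ((j : ℕ) : ℤ))) n, ← _root_.zpow_mul,
          mul_comm, _root_.zpow_mul, hαn, _root_.one_zpow]
      have hgs := geom_sum_mul (α ^ (((i : ℕ) : ℤ) - ((j : ℕ) : ℤ))) n
      rw [hpow, sub_self] at hgs
      rcases mul_eq_zero.1 hgs with h0 | h0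
      · simp [hij, h0]
      · exact absurd (sub_eq_zero.1 h0) hne
  -- handy exponent combination
  have hcombi : ∀ (j : Fin n) (v : ℤ), α ^ ((b - 1) * v) * α ^ (-(v * ((j : ℕ) : ℤ))) =
      α ^ (((b - 1) - ((j : ℕ) : ℤ)) * v) := by
    intro j v
    rw [← zpow_add₀ hα0]
    congr 1
    ring
  -- Step C : Ga * W * Finv = Atil * W * Finv * D
  have hGA : Ga * W * Finv = Atil * W * Finv * D := by
    ext i j
    set c : ℤ := (b - 1) - ((j : ℕ) : ℤ) with hc
    set Dv : F := ∑ u : Fin n, g.coeff (u : ℕ) * α ^ (c * ((u : ℕ) : ℤ)) with hDv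
    have hDj : D j j = Dv := by
      simp only [D, Matrix.diagonal_apply_eq, gb, hDv]
      refine Finset.sum_congr rfl fun u _ => ?_
      rw [mul_assoc, hcombi j]
    have hDsum : (∑ u : Fin n, gb u * α ^ (-(((u : ℕ) : ℤ) * ((j : ℕ) : ℤ)))) = Dv := by
      simp only [gb, hDv]
      refine Finset.sum_congr rfl fun u _ => ?_
      rw [mul_assoc, hcombi j]
    have hcore : ∀ s : Fin k, (G * (W * Finv)) s j = α ^ (c * ((s : ℕ) : ℤ)) * Dv := by
      intro s
      have h1 : (G * (W * Finv)) s j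
          = ∑ t : Fin n, g.coeff ((t - Fin.castLE hkn.le s : Fin n) : ℕ)
              * (α ^ ((b - 1) * ((t : ℕ) : ℤ)) * α ^ (-(((t : ℕ) : ℤ) * ((j : ℕ) : ℤ)))) := by
        rw [Matrix.mul_apply]
        simp only [W, Matrix.diagonal_mul, G, Finv, Matrix.of_apply]
      rw [h1]
      have h2 : ∀ t : Fin n, g.coeff ((t - Fin.castLE hkn.le s : Fin n) : ℕ)
            * (α ^ ((b - 1) * ((t : ℕ) : ℤ)) * α ^ (-(((t : ℕ) : ℤ) * ((j : ℕ) : ℤ))))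
          = (fun u : Fin n => g.coeff (u : ℕ)) (t - Fin.castLE hkn.le s)
            * α ^ (c * ((t : ℕ) : ℤ)) := by
        intro t
        rw [hcombi j]
      rw [Finset.sum_congr rfl (fun t _ => h2 t),
        shift_sum' hn hα0 hαn c (fun u : Fin n => g.coeff (u : ℕ)) (Fin.castLE hkn.le s)]
      simp [hDv]
    -- LHS
    have hL : (Ga * W * Finv) i j = ∑ s : Fin k, A i s * (α ^ (c * ((s : ℕ) : ℤ)) * Dv) := by
      have : Ga * W * Finv = A * (G * (W * Finv)) := by
        simp only [Ga, Matrix.mul_assoc]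
      rw [this, Matrix.mul_apply]
      exact Finset.sum_congr rfl fun s _ => by rw [hcore s]
    -- RHS
    have hR : (Atil * W * Finv * D) i j = ∑ s : Fin k, A i s * (α ^ (c * ((s : ℕ) : ℤ)) * Dv) := by
      have hassoc : Atil * W * Finv * D = Atil * (W * (Finv * D)) := by
        simp only [Matrix.mul_assoc]
      rw [hassoc, Matrix.mul_apply]
      have hent : ∀ t : Fin n, Atil i t * (W * (Finv * D)) t j
          = (fun u : ℕ => (if h : u < k then A i ⟨u, h⟩ else 0)
              * (α ^ ((b - 1) * (u : ℤ)) * (α ^ (-((u : ℤ) * ((j : ℕ) : ℤ))) * Dv))) (t : ℕ) := by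
        intro t
        simp only [Atil, W, Finv, D, Matrix.of_apply, Matrix.diagonal_mul, Matrix.mul_diagonal,
          Matrix.diagonal_apply_eq]
        rw [hDsum]
      rw [Finset.sum_congr rfl (fun t _ => hent t),
        Fin.sum_univ_eq_sum_range (fun u : ℕ => (if h : u < k then A i ⟨u, h⟩ else 0)
          * (α ^ ((b - 1) * (u : ℤ)) * (α ^ (-((u : ℤ) * ((j : ℕ) : ℤ))) * Dv))) n]
      rw [← Finset.sum_subset (Finset.range_subset_range.2 hkn.le)
        (fun u _ hu => by rw [dif_neg (by simpa using hu), zero_mul])]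
      rw [← Fin.sum_univ_eq_sum_range (fun u : ℕ => (if h : u < k then A i ⟨u, h⟩ else 0)
          * (α ^ ((b - 1) * (u : ℤ)) * (α ^ (-((u : ℤ) * ((j : ℕ) : ℤ))) * Dv))) k]
      refine Finset.sum_congr rfl fun s _ => ?_
      rw [dif_pos s.isLt]
      simp only [Fin.eta]
      rw [hc, ← hcombi j ((s : ℕ) : ℤ)]
      ring
    rw [hL, hR]
  -- Step B : conclude
  have h1 : Matrix.vecMul (Matrix.vecMul f Fmat) Finv = f := by
    rw [Matrix.vecMul_vecMul, hFF, Matrix.vecMul_one]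
  rw [← h1, hfF, Matrix.vecMul_vecMul, Matrix.vecMul_vecMul, ← Matrix.mul_assoc, hGA]
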